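/- arXiv:0712.2800 — 6 statements merged into one kernel-verified Lean document; each statement's English description precedes it below -/
import Mathlib

section
/- Let U : ℝ → ℝ^N be a C² solution of U'' - ∇W(U) = -c U' on (μ, ν), with c > 0. Then the weighted action satisfies ∫_μ^ν {½|U'(x)|² + W(U(x))} e^{cx} dx = [(e^{cx}/c)(W(U(x)) - |U'(x)|²/2)]_{x=μ}^{x=ν}. -/
open MeasureTheory Real Filter
open scoped Topology RealInnerProductSpace

/-- First weighted energy integral for a C² solution of
`U'' - ∇W(U) = -c U'` with `c > 0`:
`∫_μ^ν (½‖U'‖² + W(U)) e^{cx} dx = [(e^{cx}/c)(W(U) - ‖U'‖²/2)]_μ^ν`. -/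
theorem stmt2 {E : Type*} [NormedAddCommGroup E] [InnerProductSpace ℝ E]
    [FiniteDimensional ℝ E]
    (W : E → ℝ) (hW : ContDiff ℝ 2 W) (c : ℝ) (hc : 0 < c)
    (μ ν : ℝ) (hμν : μ < ν)
    (U : ℝ → E) (hU : ContDiff ℝ 2 U)
    (hODE : ∀ x ∈ Set.Icc μ ν,
      deriv (deriv U) x - gradient W (U x) = -c • deriv U x) :
    ∫ x in μ..ν, (1 / 2 * ‖deriv U x‖ ^ 2 + W (U x)) * exp (c * x) =
      exp (c * ν) / c * (W (U ν) - ‖deriv U ν‖ ^ 2 / 2) -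
        exp (c * μ) / c * (W (U μ) - ‖deriv U μ‖ ^ 2 / 2) := by
  have hU1 : ContDiff ℝ 1 (deriv U) := by
    exact (contDiff_succ_iff_deriv.mp (by exact_mod_cast hU : ContDiff ℝ (1 + 1) U)).2.2
  have hUdiff : Differentiable ℝ U := hU.differentiable two_ne_zero
  have hWdiff : Differentiable ℝ W := hW.differentiable two_ne_zero
  have key : ∀ x ∈ Set.uIcc μ ν,
      HasDerivAt (fun x => exp (c * x) / c * (W (U x) - ‖deriv U x‖ ^ 2 / 2))
        ((1 / 2 * ‖deriv U x‖ ^ 2 + W (U x)) * exp (c * x)) x := by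
    intro x hx
    rw [Set.uIcc_of_le hμν.le] at hx
    have h1 : HasDerivAt U (deriv U x) x := (hUdiff x).hasDerivAt
    have h2 : HasDerivAt (deriv U) (deriv (deriv U) x) x :=
      ((hU1.differentiable one_ne_zero) x).hasDerivAt
    -- derivative of W ∘ U
    have hg : HasDerivAt (fun x => W (U x)) ⟪gradient W (U x), deriv U x⟫ x := by
      have := ((hWdiff (U x)).hasGradientAt.hasFDerivAt).comp_hasDerivAt x h1
      refine this.congr_deriv ?_; simp
    -- derivative of ‖deriv U‖²
    have hn : HasDerivAt (fun x => ‖deriv U x‖ ^ 2)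
        (2 * ⟪deriv (deriv U) x, deriv U x⟫) x := by
      have := h2.inner ℝ h2
      have h' : HasDerivAt (fun t => ⟪deriv U t, deriv U t⟫)
          (2 * ⟪deriv (deriv U) x, deriv U x⟫) x := by
        refine this.congr_deriv ?_
        rw [real_inner_comm]; ring
      have heq : (fun t => ⟪deriv U t, deriv U t⟫) = fun t => ‖deriv U t‖ ^ 2 := by
        funext t; rw [real_inner_self_eq_norm_sq]
      rwa [heq] at h'
    have he : HasDerivAt (fun x => exp (c * x) / c) (exp (c * x)) x := by
      have : HasDerivAt (fun x => exp (c * x)) (exp (c * x) * c) x := by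
        simpa using ((hasDerivAt_id x).const_mul c).exp
      have := this.div_const c
      simpa [mul_div_assoc, mul_div_cancel_right₀ _ hc.ne'] using this
    have hF := he.mul (hg.sub (hn.div_const 2))
    refine hF.congr_deriv ?_
    have hode := hODE x hx
    have ha : deriv (deriv U) x = gradient W (U x) - c • deriv U x := by
      have := hode; rw [sub_eq_iff_eq_add] at this; rw [this]; module
    rw [ha, inner_sub_left, real_inner_smul_left, real_inner_self_eq_norm_sq, Pi.sub_apply]
    field_simp
    ring
  have hcont : Continuous fun x => (1 / 2 * ‖deriv U x‖ ^ 2 + W (U x)) * exp (c * x) := by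
    have hdc : Continuous (deriv U) := hU1.continuous
    fun_prop
  rw [← intervalIntegral.integral_eq_sub_of_hasDerivAt key
    (hcont.intervalIntegrable μ ν)]
end

section
/- Let W : ℝ^N → ℝ be C¹ with a⁻ its only critical point in the closed ball B̄(a⁻, r₀), and suppose r ↦ W(a⁻ + rξ) is strictly increasing in r for 0 < r ≤ r₀, all unit ξ. Let U be a bounded C² solution of U'' - ∇W(U) = -c U' (c > 0) on (-∞, x₀) with |U(x) - a⁻| ≤ r₀ for all x ≤ x₀, such that ρ(x) := |U(x) - a⁻| is eventually monotone. Then U(x) → a⁻ as x → -∞. -/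
open MeasureTheory Real Filter
open scoped Topology RealInnerProductSpace

section AuxStmt8

/-- Inner product of `u - a` with the gradient is nonnegative on the ball,
given radial strict monotonicity of `W`. -/
lemma aux_grad_inner_nonneg {E : Type*} [NormedAddCommGroup E] [InnerProductSpace ℝ E]
    [CompleteSpace E]
    (W : E → ℝ) (hW : ContDiff ℝ 1 W) (a : E) (r₀ : ℝ)
    (hmono : ∀ ξ : E, ‖ξ‖ = 1 → StrictMonoOn (fun r : ℝ => W (a + r • ξ)) (Set.Icc 0 r₀))
    (u : E) (hu : ‖u - a‖ ≤ r₀) : 0 ≤ ⟪u - a, gradient W u⟫ := by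
  rcases eq_or_ne u a with rfl | hne
  · simp
  have hr : 0 < ‖u - a‖ := by
    rw [norm_pos_iff]; exact sub_ne_zero_of_ne hne
  set r : ℝ := ‖u - a‖ with hrdef
  set ξ : E := r⁻¹ • (u - a) with hξdef
  have hξ : ‖ξ‖ = 1 := by
    rw [hξdef, norm_smul, norm_inv, norm_norm, inv_mul_cancel₀ (ne_of_gt hr)]
  set f : ℝ → ℝ := fun s => W (a + s • ξ) with hfdef
  have hline : ∀ s : ℝ, HasDerivAt (fun s : ℝ => a + s • ξ) ξ s := by
    intro s
    simpa using ((hasDerivAt_id s).smul_const ξ).const_add a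
  have hfd : ∀ s : ℝ, HasDerivAt f ⟪gradient W (a + s • ξ), ξ⟫ s := by
    intro s
    have hWd := (hW.differentiable one_ne_zero (a + s • ξ)).hasFDerivAt
    have := hWd.comp_hasDerivAt s (hline s)
    have heq : fderiv ℝ W (a + s • ξ) ξ = ⟪gradient W (a + s • ξ), ξ⟫ := by
      rw [gradient, InnerProductSpace.toDual_symm_apply]
    rwa [heq] at this
  have key : 0 ≤ ⟪gradient W (a + r • ξ), ξ⟫ := by
    have hmem : r ∈ Set.Icc (0:ℝ) r₀ := ⟨le_of_lt hr, hu⟩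
    have hd := (hfd r).hasDerivWithinAt (s := Set.Iio r)
    rw [hasDerivWithinAt_iff_tendsto_slope] at hd
    have hset : Set.Iio r \ {r} = Set.Iio r := by
      ext x; simp only [Set.mem_diff, Set.mem_Iio, Set.mem_singleton_iff]
      exact ⟨fun h => h.1, fun h => ⟨h, ne_of_lt h⟩⟩
    rw [hset] at hd
    refine ge_of_tendsto hd ?_
    filter_upwards [Ioo_mem_nhdsLT hr] with s hs
    rcases hs with ⟨hs0, hsr⟩
    have h1 : f s < f r := (hmono ξ hξ) ⟨le_of_lt hs0, le_trans (le_of_lt hsr) hu⟩ hmem hsr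
    have heq : slope f s r = (f r - f s) / (r - s) := by
      rw [slope_def_field]
    rw [slope_comm, heq]
    exact div_nonneg (by linarith) (by linarith)
  have huξ : u - a = r • ξ := by
    rw [hξdef, smul_smul, mul_inv_cancel₀ (ne_of_gt hr), one_smul]
  have hu' : a + r • ξ = u := by rw [← huξ]; abel
  have heq2 : ⟪u - a, gradient W u⟫ = r * ⟪gradient W (a + r • ξ), ξ⟫ := by
    rw [hu', real_inner_comm, huξ, real_inner_smul_right]
  rw [heq2]
  exact mul_nonneg (le_of_lt hr) key

/-- A point of a closed interval where a continuous function is below its average. -/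
lemma aux_exists_min_le_integral (h : ℝ → ℝ) (hc : Continuous h) {y z : ℝ} (hyz : y < z) :
    ∃ s ∈ Set.Icc y z, (z - y) * h s ≤ ∫ t in y..z, h t := by
  obtain ⟨s, hs, hmin⟩ := isCompact_Icc.exists_isMinOn (Set.nonempty_Icc.mpr hyz.le)
    hc.continuousOn
  refine ⟨s, hs, ?_⟩
  have h1 : ∫ _ in y..z, h s ≤ ∫ t in y..z, h t :=
    intervalIntegral.integral_mono_on hyz.le intervalIntegrable_const
      (hc.intervalIntegrable y z) (fun t ht => hmin ht)
  simpa [smul_eq_mul, mul_comm] using h1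

end AuxStmt8

set_option maxHeartbeats 2000000

/-- Asymptotic convergence at `-∞`. If `a⁻` is the only critical point of
`W` in `B̄(a⁻,r₀)`, `r ↦ W(a⁻ + rξ)` is strictly increasing on `[0,r₀]` for every unit
`ξ`, and `U` is a C² solution of `U'' - ∇W(U) = -c U'` (`c > 0`) on `(-∞, x₀)` staying
in `B̄(a⁻, r₀)` whose polar radius `ρ(x) = ‖U(x) - a⁻‖` is eventually monotone, then
`U(x) → a⁻` as `x → -∞`. -/
theorem stmt8 {E : Type*} [NormedAddCommGroup E] [InnerProductSpace ℝ E]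
    [FiniteDimensional ℝ E]
    (W : E → ℝ) (hW : ContDiff ℝ 1 W) (aminus : E) (r₀ c x₀ : ℝ)
    (hr₀ : 0 < r₀) (hc : 0 < c)
    (hcrit : ∀ u : E, ‖u - aminus‖ ≤ r₀ → gradient W u = 0 → u = aminus)
    (hmono : ∀ ξ : E, ‖ξ‖ = 1 →
      StrictMonoOn (fun r : ℝ => W (aminus + r • ξ)) (Set.Icc 0 r₀))
    (U : ℝ → E) (hU : ContDiff ℝ 2 U)
    (hODE : ∀ x < x₀, deriv (deriv U) x - gradient W (U x) = -c • deriv U x)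
    (hball : ∀ x ≤ x₀, ‖U x - aminus‖ ≤ r₀)
    (hmonot : ∃ x₁ ≤ x₀,
      MonotoneOn (fun x => ‖U x - aminus‖) (Set.Iic x₁) ∨
        AntitoneOn (fun x => ‖U x - aminus‖) (Set.Iic x₁)) :
    Tendsto U atBot (𝓝 aminus) := by
  clear hmonot
  -- basic regularity
  have hreg : Differentiable ℝ U ∧ Differentiable ℝ (deriv U) ∧
      Continuous (deriv (deriv U)) := by
    have h2 : ContDiff ℝ ((1 : WithTop ℕ∞) + 1) U := by rw [one_add_one_eq_two]; exact hU
    rw [contDiff_succ_iff_deriv] at h2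
    obtain ⟨hd, -, h1⟩ := h2
    have h1' : ContDiff ℝ ((0 : WithTop ℕ∞) + 1) (deriv U) := by rw [zero_add]; exact h1
    rw [contDiff_succ_iff_deriv] at h1'
    exact ⟨hd, h1'.1, contDiff_zero.mp h1'.2.2⟩
  obtain ⟨hUd, hVd, hAc⟩ := hreg
  set g : E → E := gradient W with hgdef
  set V : ℝ → E := deriv U with hVdef
  set A : ℝ → E := deriv V with hAdef
  have hgc : Continuous g := by
    have hgeq : g = fun u => (InnerProductSpace.toDual ℝ E).symm (fderiv ℝ W u) := rfl
    rw [hgeq]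
    exact (InnerProductSpace.toDual ℝ E).symm.continuous.comp (hW.continuous_fderiv one_ne_zero)
  -- scalar quantities
  set p : ℝ → ℝ := fun x => ⟪U x - aminus, V x⟫ with hpdef
  set p' : ℝ → ℝ := fun x => ‖V x‖ ^ 2 + ⟪U x - aminus, A x⟫ with hp'def
  set φ : ℝ → ℝ := fun x => ⟪U x - aminus, U x - aminus⟫ with hφdef
  have hφeq : ∀ x, φ x = ‖U x - aminus‖ ^ 2 := fun x => real_inner_self_eq_norm_sq _
  have hUsub : ∀ x : ℝ, HasDerivAt (fun t => U t - aminus) (V x) x :=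
    fun x => (hUd x).hasDerivAt.sub_const aminus
  have hVder : ∀ x : ℝ, HasDerivAt V (A x) x := fun x => (hVd x).hasDerivAt
  have hpd : ∀ x : ℝ, HasDerivAt p (p' x) x := by
    intro x
    have h := (hUsub x).inner ℝ (hVder x)
    have heq : ⟪U x - aminus, A x⟫ + ⟪V x, V x⟫ = p' x := by
      rw [hp'def]; rw [real_inner_self_eq_norm_sq]; ring
    rwa [heq] at h
  have hφd : ∀ x : ℝ, HasDerivAt φ (2 * p x) x := by
    intro x
    have h := (hUsub x).inner ℝ (hUsub x)
    have heq : ⟪U x - aminus, V x⟫ + ⟪V x, U x - aminus⟫ = 2 * p x := by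
      have hcomm : ⟪V x, U x - aminus⟫ = ⟪U x - aminus, V x⟫ := real_inner_comm _ _
      simp only [hpdef]
      linarith
    rwa [heq] at h
  have hpc : Continuous p := by
    have hd : Differentiable ℝ p := fun x => (hpd x).differentiableAt
    exact hd.continuous
  have hφc : Continuous φ := by
    have hd : Differentiable ℝ φ := fun x => (hφd x).differentiableAt
    exact hd.continuous
  have hp'c : Continuous p' := by
    have h1 : Continuous fun x => ‖V x‖ ^ 2 := (hVd.continuous.norm).pow 2
    have h2 : Continuous fun x => ⟪U x - aminus, A x⟫ :=
      Continuous.inner (hUd.continuous.sub continuous_const) hAc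
    exact h1.add h2
  have hVsq_cont : Continuous fun t => ‖V t‖ ^ 2 := (hVd.continuous.norm).pow 2
  -- the ODE restated
  have hODE' : ∀ x < x₀, A x + c • V x = g (U x) := by
    intro x hx
    have h : A x - g (U x) = -(c • V x) := by rw [← neg_smul]; exact hODE x hx
    have h2 : A x = -(c • V x) + g (U x) := sub_eq_iff_eq_add.mp h
    rw [h2]; abel
  -- key pointwise inequality
  have hkey : ∀ x < x₀, ‖V x‖ ^ 2 ≤ p' x + c * p x := by
    intro x hx
    have hginner : 0 ≤ ⟪U x - aminus, g (U x)⟫ :=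
      aux_grad_inner_nonneg W hW aminus r₀ hmono (U x) (hball x hx.le)
    have heq : p' x + c * p x = ‖V x‖ ^ 2 + ⟪U x - aminus, g (U x)⟫ := by
      rw [hp'def, hpdef, ← hODE' x hx, inner_add_right, real_inner_smul_right]; ring
    rw [heq]; linarith
  have hkey0 : ∀ x < x₀, 0 ≤ p' x + c * p x := fun x hx =>
    le_trans (by positivity) (hkey x hx)
  -- ψ = e^{cx} p is monotone on Iic x₀
  set ψ : ℝ → ℝ := fun x => exp (c * x) * p x with hψdef
  have hψd : ∀ x : ℝ, HasDerivAt ψ (exp (c * x) * (p' x + c * p x)) x := by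
    intro x
    have hexp : HasDerivAt (fun x : ℝ => exp (c * x)) (exp (c * x) * c) x := by
      simpa [mul_comm] using ((hasDerivAt_id x).const_mul c).exp
    have h : HasDerivAt ψ (exp (c * x) * c * p x + exp (c * x) * p' x) x := hexp.mul (hpd x)
    convert h using 1
    ring
  have hψc : Continuous ψ := (continuous_exp.comp (continuous_const.mul continuous_id)).mul hpc
  have hψmono : MonotoneOn ψ (Set.Iic x₀) := by
    apply monotoneOn_of_deriv_nonneg (convex_Iic x₀) hψc.continuousOn
    · intro x _
      exact ((hψd x).differentiableAt).differentiableWithinAt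
    · intro x hx
      rw [interior_Iic] at hx
      rw [(hψd x).deriv]
      exact mul_nonneg (exp_pos _).le (hkey0 x hx)
  have hφle : ∀ x ≤ x₀, φ x ≤ r₀ ^ 2 := by
    intro x hx
    rw [hφeq]
    have h := hball x hx
    nlinarith [norm_nonneg (U x - aminus)]
  have hφnn : ∀ x, 0 ≤ φ x := fun x => by rw [hφeq]; positivity
  -- FTC for φ
  have hFTCφ : ∀ y z : ℝ, ∫ t in y..z, 2 * p t = φ z - φ y := fun y z =>
    intervalIntegral.integral_eq_sub_of_hasDerivAt (fun t _ => hφd t)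
      ((continuous_const.mul hpc).intervalIntegrable y z)
  -- ψ is nonnegative on Iic x₀
  have hψnn : ∀ x ≤ x₀, 0 ≤ ψ x := by
    intro x hx
    by_contra hneg
    push_neg at hneg
    set K : ℝ := exp (-(c * x)) * ψ x with hKdef
    have hKneg : K < 0 := mul_neg_of_pos_of_neg (exp_pos _) hneg
    have hple : ∀ t ≤ x, p t ≤ K := by
      intro t ht
      have h1 : ψ t ≤ ψ x := hψmono (show t ∈ Set.Iic x₀ from le_trans ht hx)
        (show x ∈ Set.Iic x₀ from hx) ht
      have hpt : p t = exp (-(c * t)) * ψ t := by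
        rw [hψdef]
        simp only [← mul_assoc, ← Real.exp_add]
        simp
      have h2 : exp (-(c * t)) * ψ t ≤ exp (-(c * t)) * ψ x :=
        mul_le_mul_of_nonneg_left h1 (exp_pos _).le
      have h3 : exp (-(c * t)) * ψ x ≤ exp (-(c * x)) * ψ x := by
        apply mul_le_mul_of_nonpos_right _ hneg.le
        apply exp_le_exp.mpr
        nlinarith
      rw [hpt, hKdef] at *
      linarith
    have h2K : 0 < -(2 * K) := by linarith
    set y : ℝ := x - (r₀ ^ 2 + 1) / (-(2 * K)) with hydef
    have hyx : y ≤ x := by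
      rw [hydef]
      have hq : 0 < (r₀ ^ 2 + 1) / (-(2 * K)) := by positivity
      linarith
    have hint : ∫ t in y..x, 2 * p t ≤ ∫ t in y..x, 2 * K := by
      apply intervalIntegral.integral_mono_on hyx ((continuous_const.mul hpc).intervalIntegrable y x)
        intervalIntegrable_const
      intro t ht
      have := hple t ht.2
      show 2 * p t ≤ 2 * K
      linarith
    rw [hFTCφ y x, intervalIntegral.integral_const, smul_eq_mul] at hint
    have hxy : (x - y) * (2 * K) = -(r₀ ^ 2 + 1) := by
      rw [hydef]
      have hK0 : K ≠ 0 := hKneg.ne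
      field_simp
      ring
    rw [hxy] at hint
    have hb1 := hφle y (le_trans hyx hx)
    have hb2 := hφnn x
    linarith
  have hpnn : ∀ x ≤ x₀, 0 ≤ p x := by
    intro x hx
    have h := hψnn x hx
    simp only [hψdef] at h
    by_contra hcon
    push_neg at hcon
    have hlt : rexp (c * x) * p x < 0 := mul_neg_of_pos_of_neg (exp_pos _) hcon
    linarith
  -- φ is monotone on Iic x₀
  have hφmono : MonotoneOn φ (Set.Iic x₀) := by
    apply monotoneOn_of_deriv_nonneg (convex_Iic x₀) hφc.continuousOn
    · intro x _
      exact (hφd x).differentiableAt.differentiableWithinAt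
    · intro x hx
      rw [interior_Iic] at hx
      rw [(hφd x).deriv]
      have := hpnn x hx.le
      linarith
  -- q = 2p + cφ is monotone and nonnegative on Iic x₀
  set q : ℝ → ℝ := fun x => 2 * p x + c * φ x with hqdef
  have hqd : ∀ x : ℝ, HasDerivAt q (2 * p' x + c * (2 * p x)) x := fun x =>
    ((hpd x).const_mul 2).add ((hφd x).const_mul c)
  have hqc : Continuous q := (continuous_const.mul hpc).add (continuous_const.mul hφc)
  have hq'c : Continuous fun t => 2 * p' t + c * (2 * p t) :=
    (continuous_const.mul hp'c).add (continuous_const.mul (continuous_const.mul hpc))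
  have hqmono : MonotoneOn q (Set.Iic x₀) := by
    apply monotoneOn_of_deriv_nonneg (convex_Iic x₀) hqc.continuousOn
    · intro x _
      exact (hqd x).differentiableAt.differentiableWithinAt
    · intro x hx
      rw [interior_Iic] at hx
      rw [(hqd x).deriv]
      have := hkey0 x hx
      linarith
  have hqnn : ∀ x ≤ x₀, 0 ≤ q x := fun x hx =>
    add_nonneg (by linarith [hpnn x hx]) (mul_nonneg hc.le (hφnn x))
  -- L² bound for V
  set b : ℝ := x₀ - 1 with hbdef
  have hL2 : ∀ y z : ℝ, y ≤ z → z ≤ b → (∫ t in y..z, ‖V t‖ ^ 2) ≤ q b / 2 := by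
    intro y z hyz hzb
    have hFTCq : ∫ t in y..z, (2 * p' t + c * (2 * p t)) = q z - q y :=
      intervalIntegral.integral_eq_sub_of_hasDerivAt (fun t _ => hqd t)
        (hq'c.intervalIntegrable y z)
    have hmono2 : (∫ t in y..z, 2 * ‖V t‖ ^ 2) ≤
        ∫ t in y..z, (2 * p' t + c * (2 * p t)) := by
      apply intervalIntegral.integral_mono_on hyz
        ((continuous_const.mul hVsq_cont).intervalIntegrable y z) (hq'c.intervalIntegrable y z)
      intro t ht
      have := hkey t (by rw [hbdef] at hzb; linarith [ht.2])
      show 2 * ‖V t‖ ^ 2 ≤ 2 * p' t + c * (2 * p t)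
      linarith
    rw [hFTCq] at hmono2
    rw [intervalIntegral.integral_const_mul] at hmono2
    have h1 : q z ≤ q b := hqmono (show z ∈ Set.Iic x₀ by rw [Set.mem_Iic, hbdef] at *; linarith)
      (show b ∈ Set.Iic x₀ by rw [Set.mem_Iic, hbdef]; linarith) hzb
    have h2 : 0 ≤ q y := hqnn y (by rw [hbdef] at hzb; linarith)
    have h4 : (2:ℝ) * (∫ t in y..z, ‖V t‖ ^ 2) ≤ q b := by
      calc (2:ℝ) * (∫ t in y..z, ‖V t‖ ^ 2) = 2 * ∫ x in y..z, ‖V x‖ ^ 2 := rfl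
        _ ≤ q z - q y := hmono2
        _ ≤ q b := by linarith
    clear_value V q b
    clear * - h4
    linarith only [h4]
  -- tail integrals are small
  set Gfun : ℝ → ℝ := fun y => ∫ t in y..b, ‖V t‖ ^ 2 with hGdef
  have hGadj : ∀ u v : ℝ, Gfun u = (∫ t in u..v, ‖V t‖ ^ 2) + Gfun v := by
    intro u v
    rw [hGdef]
    exact (intervalIntegral.integral_add_adjacent_intervals
      (hVsq_cont.intervalIntegrable u v) (hVsq_cont.intervalIntegrable v b)).symm
  have htail : ∀ η > (0:ℝ), ∃ Y, Y + 4 ≤ b ∧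
      ∀ y ≤ Y, (∫ t in y..(y + 4), ‖V t‖ ^ 2) ≤ η := by
    intro η hη
    have hbdd : BddAbove (Gfun '' Set.Iic b) := by
      refine ⟨q b / 2, ?_⟩
      rintro w ⟨y, hy, rfl⟩
      exact hL2 y b hy le_rfl
    have hne : (Gfun '' Set.Iic b).Nonempty := ⟨Gfun b, ⟨b, Set.mem_Iic.mpr le_rfl, rfl⟩⟩
    set S := sSup (Gfun '' Set.Iic b) with hSdef
    obtain ⟨w, hw_mem, hw⟩ := exists_lt_of_lt_csSup hne (show S - η < S by linarith)
    obtain ⟨Yr, hYr, rfl⟩ := hw_mem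
    rw [Set.mem_Iic] at hYr
    refine ⟨Yr - 4, by linarith, ?_⟩
    intro y hy
    have hy4 : y + 4 ≤ Yr := by linarith
    have h1 : Gfun y ≤ S := le_csSup hbdd ⟨y, Set.mem_Iic.mpr (by linarith), rfl⟩
    have h2 : Gfun Yr ≤ Gfun (y + 4) := by
      rw [hGadj (y + 4) Yr]
      have hnn : 0 ≤ ∫ t in (y + 4)..Yr, ‖V t‖ ^ 2 :=
        intervalIntegral.integral_nonneg hy4 (fun t _ => by positivity)
      linarith
    have h3 := hGadj y (y + 4)
    linarith
  -- FTC for U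
  have hFTCU : ∀ u v : ℝ, ∫ r in u..v, V r = U v - U u := fun u v =>
    intervalIntegral.integral_eq_sub_of_hasDerivAt (fun r _ => (hUd r).hasDerivAt)
      (hVd.continuous.intervalIntegrable u v)
  -- MAIN CLAIM: points with arbitrarily small gradient
  have hclaim : ∀ ε > (0:ℝ), ∃ z ≤ x₀, ‖g (U z)‖ ≤ ε := by
    intro ε hε
    -- uniform continuity of g on the closed ball
    have hcomp : IsCompact (Metric.closedBall aminus r₀) := isCompact_closedBall _ _
    have huc := hcomp.uniformContinuousOn_of_continuous hgc.continuousOn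
    rw [Metric.uniformContinuousOn_iff] at huc
    obtain ⟨δ, hδpos, hδ⟩ := huc (ε / 4) (by positivity)
    set η : ℝ := min ((δ / 3) ^ 2) ((ε / (4 * (1 + c))) ^ 2) with hηdef
    have hηpos : 0 < η := by
      apply lt_min <;> positivity
    set θ : ℝ := Real.sqrt η with hθdef
    have hθpos : 0 < θ := Real.sqrt_pos.mpr hηpos
    have hθsq : θ ^ 2 = η := Real.sq_sqrt hηpos.le
    have hθ1 : θ ≤ δ / 3 := by
      rw [hθdef]
      calc Real.sqrt η ≤ Real.sqrt ((δ / 3) ^ 2) := Real.sqrt_le_sqrt (min_le_left _ _)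
        _ = δ / 3 := Real.sqrt_sq (by positivity)
    have hθ2 : θ ≤ ε / (4 * (1 + c)) := by
      rw [hθdef]
      calc Real.sqrt η ≤ Real.sqrt ((ε / (4 * (1 + c))) ^ 2) :=
            Real.sqrt_le_sqrt (min_le_right _ _)
        _ = ε / (4 * (1 + c)) := Real.sqrt_sq (by positivity)
    obtain ⟨Y, hYb, htailY⟩ := htail η hηpos
    set y : ℝ := min Y (x₀ - 5) with hydef
    have hyY : y ≤ Y := min_le_left _ _
    have hy5 : y + 5 ≤ x₀ := by
      have := min_le_right Y (x₀ - 5)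
      rw [hydef]; linarith
    have hI : (∫ t in y..(y + 4), ‖V t‖ ^ 2) ≤ η := htailY y hyY
    -- sub-interval integrals are ≤ η
    have hsub : ∀ u v : ℝ, y ≤ u → u ≤ v → v ≤ y + 4 → (∫ r in u..v, ‖V r‖ ^ 2) ≤ η := by
      intro u v hu huv hv
      have e1 : (∫ r in y..u, ‖V r‖ ^ 2) + (∫ r in u..v, ‖V r‖ ^ 2) = ∫ r in y..v, ‖V r‖ ^ 2 :=
        intervalIntegral.integral_add_adjacent_intervals (hVsq_cont.intervalIntegrable _ _)
          (hVsq_cont.intervalIntegrable _ _)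
      have e2 : (∫ r in y..v, ‖V r‖ ^ 2) + (∫ r in v..(y + 4), ‖V r‖ ^ 2)
          = ∫ r in y..(y + 4), ‖V r‖ ^ 2 :=
        intervalIntegral.integral_add_adjacent_intervals (hVsq_cont.intervalIntegrable _ _)
          (hVsq_cont.intervalIntegrable _ _)
      have n1 : 0 ≤ ∫ r in y..u, ‖V r‖ ^ 2 :=
        intervalIntegral.integral_nonneg hu (fun r _ => by positivity)
      have n2 : 0 ≤ ∫ r in v..(y + 4), ‖V r‖ ^ 2 :=
        intervalIntegral.integral_nonneg hv (fun r _ => by positivity)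
      linarith
    -- find s and t with small velocity
    obtain ⟨s, hsmem, hsmin⟩ := aux_exists_min_le_integral (fun t => ‖V t‖ ^ 2) hVsq_cont
      (show y < y + 1 by linarith)
    obtain ⟨t, htmem, htmin⟩ := aux_exists_min_le_integral (fun t => ‖V t‖ ^ 2) hVsq_cont
      (show y + 2 < y + 3 by linarith)
    have hsV : ‖V s‖ ^ 2 ≤ η := by
      have h1 : (∫ r in y..(y + 1), ‖V r‖ ^ 2) ≤ η := hsub y (y + 1) le_rfl (by linarith)
        (by linarith)
      have h2 := hsmin
      simp only [show y + 1 - y = 1 by ring, one_mul] at h2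
      linarith
    have htV : ‖V t‖ ^ 2 ≤ η := by
      have h1 : (∫ r in (y + 2)..(y + 3), ‖V r‖ ^ 2) ≤ η := hsub (y + 2) (y + 3)
        (by linarith) (by linarith) (by linarith)
      have h2 := htmin
      simp only [show y + 3 - (y + 2) = 1 by ring, one_mul] at h2
      linarith
    have hsV' : ‖V s‖ ≤ θ := by
      nlinarith [norm_nonneg (V s), sq_nonneg (‖V s‖ - θ), sq_nonneg (‖V s‖ + θ)]
    have htV' : ‖V t‖ ≤ θ := by
      nlinarith [norm_nonneg (V t), sq_nonneg (‖V t‖ - θ), sq_nonneg (‖V t‖ + θ)]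
    have hs1 : y ≤ s := hsmem.1
    have hs2 : s ≤ y + 1 := hsmem.2
    have ht1 : y + 2 ≤ t := htmem.1
    have ht2 : t ≤ y + 3 := htmem.2
    have hst : s ≤ t := by linarith
    have hts1 : 1 ≤ t - s := by linarith
    have h2θ : (0:ℝ) < 2 * θ := by linarith
    -- U moves little on [s, t]
    have hUdiff : ∀ τ, s ≤ τ → τ ≤ t → ‖U τ - U s‖ ≤ 2 * θ := by
      intro τ hsτ hτt
      rw [← hFTCU s τ]
      have step1 : ‖∫ r in s..τ, V r‖ ≤ ∫ r in s..τ, ‖V r‖ :=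
        intervalIntegral.norm_integral_le_integral_norm hsτ
      have step2 : (∫ r in s..τ, ‖V r‖) ≤ ∫ r in s..τ, (‖V r‖ ^ 2 / (2 * θ) + θ / 2) := by
        apply intervalIntegral.integral_mono_on hsτ
          (hVd.continuous.norm.intervalIntegrable _ _)
          (((hVsq_cont.div_const _).add continuous_const).intervalIntegrable _ _)
        intro r _
        have h0 : 0 ≤ ‖V r‖ := norm_nonneg _
        have heqp : ‖V r‖ ^ 2 / (2 * θ) + θ / 2 - ‖V r‖ = (‖V r‖ - θ) ^ 2 / (2 * θ) := by
          field_simp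
          ring
        have hnn : 0 ≤ (‖V r‖ - θ) ^ 2 / (2 * θ) := div_nonneg (sq_nonneg _) h2θ.le
        show ‖V r‖ ≤ ‖V r‖ ^ 2 / (2 * θ) + θ / 2
        linarith
      have step3 : (∫ r in s..τ, (‖V r‖ ^ 2 / (2 * θ) + θ / 2))
          = (∫ r in s..τ, ‖V r‖ ^ 2) / (2 * θ) + (τ - s) * (θ / 2) := by
        rw [intervalIntegral.integral_add ((hVsq_cont.div_const _).intervalIntegrable _ _)
          intervalIntegrable_const, intervalIntegral.integral_div,
          intervalIntegral.integral_const, smul_eq_mul]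
      have hsub1 : (∫ r in s..τ, ‖V r‖ ^ 2) ≤ η := hsub s τ hs1 hsτ (by linarith)
      have hτs3 : τ - s ≤ 3 := by linarith
      have hfrac : (∫ r in s..τ, ‖V r‖ ^ 2) / (2 * θ) ≤ η / (2 * θ) := by
        gcongr
      have hηθ : η / (2 * θ) = θ / 2 := by
        rw [← hθsq]
        field_simp
      have hlast : (τ - s) * (θ / 2) ≤ 3 * (θ / 2) :=
        mul_le_mul_of_nonneg_right hτs3 (by linarith)
      rw [hηθ] at hfrac
      calc ‖∫ r in s..τ, V r‖ ≤ ∫ r in s..τ, (‖V r‖ ^ 2 / (2 * θ) + θ / 2) := by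
            linarith
        _ = (∫ r in s..τ, ‖V r‖ ^ 2) / (2 * θ) + (τ - s) * (θ / 2) := step3
        _ ≤ θ / 2 + 3 * (θ / 2) := by linarith
        _ = 2 * θ := by ring
    -- the solution stays in the ball
    have hballs : ∀ τ, τ ≤ x₀ → U τ ∈ Metric.closedBall aminus r₀ := fun τ hτ =>
      Metric.mem_closedBall.mpr (by rw [dist_eq_norm]; exact hball τ hτ)
    -- gradient varies little along U on [s, t]
    have hgU : ∀ τ, s ≤ τ → τ ≤ t → ‖g (U τ) - g (U s)‖ ≤ ε / 4 := by
      intro τ hsτ hτt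
      have hd1 : dist (U τ) (U s) < δ := by
        rw [dist_eq_norm]
        calc ‖U τ - U s‖ ≤ 2 * θ := hUdiff τ hsτ hτt
          _ ≤ 2 * (δ / 3) := by linarith
          _ < δ := by linarith
      have h := hδ (U τ) (hballs τ (by linarith)) (U s) (hballs s (by linarith)) hd1
      rw [dist_eq_norm] at h
      linarith
    -- integrate the ODE over [s, t]
    have hODEint : ∫ τ in s..t, g (U τ) = (V t - V s) + c • (U t - U s) := by
      have hint1 : ∫ τ in s..t, A τ = V t - V s :=
        intervalIntegral.integral_eq_sub_of_hasDerivAt (fun τ _ => hVder τ)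
          (hAc.intervalIntegrable _ _)
      have hint2 : ∫ τ in s..t, V τ = U t - U s := hFTCU s t
      have hcongr : ∫ τ in s..t, g (U τ) = ∫ τ in s..t, (A τ + c • V τ) := by
        apply intervalIntegral.integral_congr
        intro τ hτ
        rw [Set.uIcc_of_le hst] at hτ
        exact (hODE' τ (by linarith [hτ.2])).symm
      rw [hcongr, intervalIntegral.integral_add (hAc.intervalIntegrable _ _)
        (show IntervalIntegrable (fun τ => c • V τ) volume s t from (hVd.continuous.const_smul c).intervalIntegrable _ _),
        intervalIntegral.integral_smul, hint1, hint2]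
    have hIntNorm : ‖∫ τ in s..t, g (U τ)‖ ≤ 2 * θ + c * (2 * θ) := by
      rw [hODEint]
      have h1 : ‖V t - V s‖ ≤ 2 * θ := le_trans (norm_sub_le _ _) (by linarith)
      have h2 : ‖c • (U t - U s)‖ ≤ c * (2 * θ) := by
        rw [norm_smul, Real.norm_eq_abs, abs_of_pos hc]
        exact mul_le_mul_of_nonneg_left (hUdiff t hst le_rfl) hc.le
      exact le_trans (norm_add_le _ _) (by linarith)
    have hgUcont : Continuous fun τ => g (U τ) := hgc.comp hUd.continuous
    have hconst2 : ∫ τ in s..t, (g (U s) - g (U τ))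
        = (t - s) • g (U s) - ∫ τ in s..t, g (U τ) := by
      rw [intervalIntegral.integral_sub intervalIntegrable_const
        (hgUcont.intervalIntegrable _ _), intervalIntegral.integral_const]
    have hdiffnorm : ‖∫ τ in s..t, (g (U s) - g (U τ))‖ ≤ (t - s) * (ε / 4) := by
      calc ‖∫ τ in s..t, (g (U s) - g (U τ))‖ ≤ ∫ τ in s..t, ‖g (U s) - g (U τ)‖ :=
            intervalIntegral.norm_integral_le_integral_norm hst
        _ ≤ ∫ _ in s..t, (ε / 4) := by
            apply intervalIntegral.integral_mono_on hst
              ((continuous_const.sub hgUcont).norm.intervalIntegrable _ _)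
              intervalIntegrable_const
            intro τ hτ
            show ‖g (U s) - g (U τ)‖ ≤ ε / 4
            rw [norm_sub_rev]
            exact hgU τ hτ.1 hτ.2
        _ = (t - s) * (ε / 4) := by rw [intervalIntegral.integral_const, smul_eq_mul]
    have hsplit : (t - s) • g (U s)
        = (∫ τ in s..t, (g (U s) - g (U τ))) + ∫ τ in s..t, g (U τ) := by
      rw [hconst2]; abel
    have hmain : (t - s) * ‖g (U s)‖ ≤ (t - s) * (ε / 4) + (2 * θ + c * (2 * θ)) := by
      have h1 : (t - s) * ‖g (U s)‖ = ‖(t - s) • g (U s)‖ := by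
        rw [norm_smul, Real.norm_eq_abs, abs_of_nonneg (by linarith)]
      rw [h1, hsplit]
      exact le_trans (norm_add_le _ _) (add_le_add hdiffnorm hIntNorm)
    have hθfin : 2 * θ + c * (2 * θ) ≤ ε / 2 := by
      have h1 : 2 * θ + c * (2 * θ) = 2 * (1 + c) * θ := by ring
      have h2 : 2 * (1 + c) * θ ≤ 2 * (1 + c) * (ε / (4 * (1 + c))) :=
        mul_le_mul_of_nonneg_left hθ2 (by positivity)
      have h3 : 2 * (1 + c) * (ε / (4 * (1 + c))) = ε / 2 := by
        field_simp
        ring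
      linarith
    have hGfin : ‖g (U s)‖ ≤ ε := by
      rcases le_or_gt (‖g (U s)‖) (ε / 4) with hcase | hcase
      · linarith
      · have h1 : (1:ℝ) * (‖g (U s)‖ - ε / 4) ≤ (t - s) * (‖g (U s)‖ - ε / 4) :=
          mul_le_mul_of_nonneg_right hts1 (by linarith)
        nlinarith [hmain, hθfin]
    exact ⟨s, by linarith, hGfin⟩
  -- points where U is close to aminus
  have hsmall : ∀ ε > (0:ℝ), ∃ z ≤ x₀, ‖U z - aminus‖ < ε := by
    intro ε hε
    by_contra hcon
    push_neg at hcon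
    set Kset : Set E := Metric.closedBall aminus r₀ ∩ {u | ε ≤ ‖u - aminus‖} with hKset
    have hKcomp : IsCompact Kset := by
      apply (isCompact_closedBall aminus r₀).inter_right
      exact isClosed_le continuous_const ((continuous_id.sub continuous_const).norm)
    have hKne : Kset.Nonempty := by
      refine ⟨U x₀, ?_, ?_⟩
      · exact Metric.mem_closedBall.mpr (by rw [dist_eq_norm]; exact hball x₀ le_rfl)
      · exact hcon x₀ le_rfl
    obtain ⟨u₀, hu₀, hu₀min⟩ := hKcomp.exists_isMinOn hKne hgc.norm.continuousOn
    have hm : 0 < ‖g u₀‖ := by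
      rcases (norm_nonneg (g u₀)).lt_or_eq with h | h
      · exact h
      · exfalso
        have hg0 : g u₀ = 0 := norm_eq_zero.mp h.symm
        have hu₀ball : ‖u₀ - aminus‖ ≤ r₀ := by
          have h1 := hu₀.1
          rw [Metric.mem_closedBall, dist_eq_norm] at h1
          exact h1
        have heqa : u₀ = aminus := hcrit u₀ hu₀ball hg0
        have h2 : ε ≤ ‖u₀ - aminus‖ := hu₀.2
        rw [heqa, sub_self, norm_zero] at h2
        linarith
    obtain ⟨z, hz, hgz⟩ := hclaim (‖g u₀‖ / 2) (by positivity)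
    have hUz : U z ∈ Kset :=
      ⟨Metric.mem_closedBall.mpr (by rw [dist_eq_norm]; exact hball z hz), hcon z hz⟩
    have hmin := hu₀min hUz
    simp only [Set.mem_setOf_eq] at hmin
    linarith
  -- conclusion
  rw [Metric.tendsto_nhds]
  intro ε hε
  obtain ⟨z, hz, hUz⟩ := hsmall ε hε
  rw [eventually_atBot]
  refine ⟨z, fun x hx => ?_⟩
  have hφx : φ x ≤ φ z :=
    hφmono (show x ∈ Set.Iic x₀ from Set.mem_Iic.mpr (le_trans hx hz))
      (Set.mem_Iic.mpr hz) hx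
  rw [hφeq, hφeq] at hφx
  have hnorm : ‖U x - aminus‖ ≤ ‖U z - aminus‖ := by
    nlinarith [norm_nonneg (U x - aminus), norm_nonneg (U z - aminus)]
  rw [dist_eq_norm]
  linarith
end

section
/- Let U = a + ρ n be in polar form with ρ = |U - a|, and suppose U is C² and solves the polar equation ρ'' + c ρ' = ρ|n'|² + ∇W(a + ρn)·n where ∇W(a+ρn)·n ≥ 0 pointwise. Then |U'|² + ρ ∇W(U)·n = ½[(ρ²)'' + c(ρ²)'], and hence for any ξ, ∫_{ξ-1}^{ξ} |U'(x)|² dx ≤ ½[(ρ²)'(ξ) - (ρ²)'(ξ-1)] + (c/2)[ρ²(ξ) - ρ²(ξ-1)]. -/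
open MeasureTheory Real Filter
open scoped Topology RealInnerProductSpace

/-- The identity `‖U'‖² + ρ ⟪∇W(U), n⟫ = ½[(ρ²)'' + c(ρ²)']` for a C²
function in polar form `U = a + ρ n` satisfying the polar equation, and the resulting
integral inequality on unit intervals when `⟪∇W(a + ρn), n⟫ ≥ 0`. -/
theorem stmt9 {E : Type*} [NormedAddCommGroup E] [InnerProductSpace ℝ E]
    [FiniteDimensional ℝ E]
    (W : E → ℝ) (hW : ContDiff ℝ 1 W) (a : E) (c : ℝ)
    (U : ℝ → E) (ρ : ℝ → ℝ) (n : ℝ → E)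
    (hU : ContDiff ℝ 2 U) (hρ : ContDiff ℝ 2 ρ) (hn : ContDiff ℝ 2 n)
    (hpolar : ∀ x : ℝ, U x = a + ρ x • n x)
    (hρdef : ∀ x : ℝ, ρ x = ‖U x - a‖)
    (hρpos : ∀ x : ℝ, 0 < ρ x)
    (hnunit : ∀ x : ℝ, ‖n x‖ = 1)
    (heq : ∀ x : ℝ, deriv (deriv ρ) x + c * deriv ρ x =
      ρ x * ‖deriv n x‖ ^ 2 + ⟪gradient W (a + ρ x • n x), n x⟫)
    (hpos : ∀ x : ℝ, 0 ≤ ⟪gradient W (a + ρ x • n x), n x⟫) :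
    (∀ x : ℝ, ‖deriv U x‖ ^ 2 + ρ x * ⟪gradient W (U x), n x⟫ =
      1 / 2 * (deriv (deriv (fun t => ρ t ^ 2)) x +
        c * deriv (fun t => ρ t ^ 2) x)) ∧
    (∀ ξ : ℝ, ∫ x in (ξ - 1)..ξ, ‖deriv U x‖ ^ 2 ≤
      1 / 2 * (deriv (fun t => ρ t ^ 2) ξ - deriv (fun t => ρ t ^ 2) (ξ - 1)) +
        c / 2 * (ρ ξ ^ 2 - ρ (ξ - 1) ^ 2)) := by
  have hρ1 : ContDiff ℝ 1 (deriv ρ) := by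
    have h2 : ContDiff ℝ ((1:ℕ∞) + 1) ρ := by norm_num at hρ ⊢; exact hρ
    exact (contDiff_succ_iff_deriv.mp h2).2.2
  have hρd : Differentiable ℝ ρ := hρ.differentiable (by norm_num)
  have hnd : Differentiable ℝ n := hn.differentiable (by norm_num)
  have hρ'd : Differentiable ℝ (deriv ρ) := hρ1.differentiable one_ne_zero
  have hUfun : U = fun x => a + ρ x • n x := funext hpolar
  have hU' : ∀ x, deriv U x = deriv ρ x • n x + ρ x • deriv n x := by
    intro x
    rw [hUfun, deriv_const_add]
    exact (deriv_smul (hρd x) (hnd x)).trans (add_comm _ _)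
  have horth : ∀ x, ⟪n x, deriv n x⟫ = 0 := by
    intro x
    have h1 : (fun y => (inner ℝ (n y) (n y) : ℝ)) = fun _ => (1:ℝ) := by
      funext y; rw [real_inner_self_eq_norm_sq, hnunit]; norm_num
    have h2 : deriv (fun y => (inner ℝ (n y) (n y) : ℝ)) x = 0 := by rw [h1]; simp
    rw [deriv_inner_apply ℝ (hnd x) (hnd x), real_inner_comm (deriv n x) (n x)] at h2
    rw [real_inner_comm]
    linarith
  have hnormU : ∀ x, ‖deriv U x‖ ^ 2 = deriv ρ x ^ 2 + ρ x ^ 2 * ‖deriv n x‖ ^ 2 := by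
    intro x
    rw [hU' x, norm_add_sq_real, real_inner_smul_left, real_inner_smul_right, horth,
      norm_smul, norm_smul, hnunit]
    simp [mul_pow, sq_abs]
  have hg1 : deriv (fun t => ρ t ^ 2) = fun x => 2 * ρ x * deriv ρ x := by
    funext x
    rw [deriv_fun_pow (hρd x) 2]
    norm_num
  have hg2 : ∀ x, deriv (deriv (fun t => ρ t ^ 2)) x =
      2 * (deriv ρ x ^ 2 + ρ x * deriv (deriv ρ) x) := by
    intro x
    rw [hg1]
    rw [show (fun x => 2 * ρ x * deriv ρ x) = fun x => 2 * (ρ x * deriv ρ x) from by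
      funext y; ring]
    rw [deriv_const_mul (d := fun y => ρ y * deriv ρ y) _ ((hρd x).mul (hρ'd x)), deriv_fun_mul (hρd x) (hρ'd x)]
    ring
  have key : ∀ x : ℝ, ‖deriv U x‖ ^ 2 + ρ x * ⟪gradient W (U x), n x⟫ =
      1 / 2 * (deriv (deriv (fun t => ρ t ^ 2)) x + c * deriv (fun t => ρ t ^ 2) x) := by
    intro x
    rw [hnormU x, hg2 x, hg1, hpolar x]
    have h := heq x
    linear_combination (-(ρ x)) * h
  refine ⟨key, fun ξ => ?_⟩
  have hle : ξ - 1 ≤ ξ := by linarith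
  have hcontU : Continuous fun x => ‖deriv U x‖ ^ 2 :=
    ((hU.continuous_deriv (by norm_num)).norm.pow 2)
  have hcontg' : Continuous (deriv (fun t => ρ t ^ 2)) := by
    rw [hg1]
    exact ((continuous_const.mul hρ.continuous).mul hρ1.continuous)
  have hcontg'' : Continuous (deriv (deriv (fun t => ρ t ^ 2))) := by
    rw [funext hg2]
    exact continuous_const.mul ((hρ1.continuous.pow 2).add
      (hρ.continuous.mul (hρ1.continuous_deriv le_rfl)))
  have hgd : Differentiable ℝ (fun t => ρ t ^ 2) := fun x => (hρd x).pow 2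
  have hg'd : Differentiable ℝ (deriv (fun t => ρ t ^ 2)) := by
    rw [hg1]
    exact ((hρd.const_mul 2).mul hρ'd)
  have hiA : IntervalIntegrable (deriv (deriv (fun t => ρ t ^ 2))) volume (ξ - 1) ξ :=
    hcontg''.intervalIntegrable _ _
  have hiB : IntervalIntegrable (deriv (fun t => ρ t ^ 2)) volume (ξ - 1) ξ :=
    hcontg'.intervalIntegrable _ _
  have ftc1 : ∫ x in (ξ - 1)..ξ, deriv (deriv (fun t => ρ t ^ 2)) x =
      deriv (fun t => ρ t ^ 2) ξ - deriv (fun t => ρ t ^ 2) (ξ - 1) :=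
    intervalIntegral.integral_deriv_eq_sub (fun x _ => hg'd x) hiA
  have ftc2 : ∫ x in (ξ - 1)..ξ, deriv (fun t => ρ t ^ 2) x = ρ ξ ^ 2 - ρ (ξ - 1) ^ 2 :=
    intervalIntegral.integral_deriv_eq_sub (fun x _ => hgd x) hiB
  have hmono : ∫ x in (ξ - 1)..ξ, ‖deriv U x‖ ^ 2 ≤
      ∫ x in (ξ - 1)..ξ, 1 / 2 * (deriv (deriv (fun t => ρ t ^ 2)) x +
        c * deriv (fun t => ρ t ^ 2) x) := by
    apply intervalIntegral.integral_mono_on hle (hcontU.intervalIntegrable _ _)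
      ((continuous_const.mul (hcontg''.add (continuous_const.mul hcontg'))).intervalIntegrable _ _)
    intro x _
    have h0 : 0 ≤ ρ x * ⟪gradient W (U x), n x⟫ := by
      rw [hpolar x]; exact mul_nonneg (hρpos x).le (hpos x)
    show ‖deriv U x‖ ^ 2 ≤ 1 / 2 * (deriv (deriv (fun t => ρ t ^ 2)) x +
        c * deriv (fun t => ρ t ^ 2) x)
    linarith [key x]
  calc ∫ x in (ξ - 1)..ξ, ‖deriv U x‖ ^ 2 ≤ _ := hmono
    _ = 1 / 2 * ((∫ x in (ξ - 1)..ξ, deriv (deriv (fun t => ρ t ^ 2)) x) +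
        c * ∫ x in (ξ - 1)..ξ, deriv (fun t => ρ t ^ 2) x) := by
      rw [intervalIntegral.integral_const_mul,
        intervalIntegral.integral_add hiA (hiB.const_mul c),
        intervalIntegral.integral_const_mul]
    _ = 1 / 2 * (deriv (fun t => ρ t ^ 2) ξ - deriv (fun t => ρ t ^ 2) (ξ - 1)) +
        c / 2 * (ρ ξ ^ 2 - ρ (ξ - 1) ^ 2) := by
      rw [ftc1, ftc2]; ring
end

section
/- Let ρ : [λ₀, λ₁] → ℝ be C² with ρ'' + c ρ' ≥ w* > 0 on [λ₀, λ₁], c ρ(λ₀) + ρ'(λ₀⁺) ≥ 0, and 0 ≤ ρ ≤ R on [λ₀, λ₁]. Then λ₁ - λ₀ ≤ (1/w*) { cR + [ (cR)² + 2 w* |R - ρ(λ₀)| ]^{1/2} }. -/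
open Real

/-- Uniform time bound (analytic content of Lemma 6.6): if `ρ` is C² on
`[λ₀, λ₁]` with `ρ'' + c ρ' ≥ w* > 0`, `c ρ(λ₀) + ρ'(λ₀) ≥ 0`, and `0 ≤ ρ ≤ R`, then
`λ₁ - λ₀ ≤ (1/w*)(cR + √((cR)² + 2 w* |R - ρ(λ₀)|))`. -/
theorem stmt13 (c wstar R lam₀ lam₁ : ℝ) (ρ ρ' ρ'' : ℝ → ℝ)
    (hc : 0 < c) (hw : 0 < wstar) (hlam : lam₀ ≤ lam₁)
    (hderiv : ∀ x ∈ Set.Icc lam₀ lam₁, HasDerivAt ρ (ρ' x) x)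
    (hderiv2 : ∀ x ∈ Set.Icc lam₀ lam₁, HasDerivAt ρ' (ρ'' x) x)
    (hineq : ∀ x ∈ Set.Icc lam₀ lam₁, wstar ≤ ρ'' x + c * ρ' x)
    (hinit : 0 ≤ c * ρ lam₀ + ρ' lam₀)
    (hbdd : ∀ x ∈ Set.Icc lam₀ lam₁, 0 ≤ ρ x ∧ ρ x ≤ R) :
    lam₁ - lam₀ ≤
      1 / wstar * (c * R + Real.sqrt ((c * R) ^ 2 + 2 * wstar * |R - ρ lam₀|)) := by
  set D := Set.Icc lam₀ lam₁ with hD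
  have hconv : Convex ℝ D := convex_Icc _ _
  have hintD : interior D ⊆ D := interior_subset
  have hmem₀ : lam₀ ∈ D := Set.left_mem_Icc.2 hlam
  have hmem₁ : lam₁ ∈ D := Set.right_mem_Icc.2 hlam
  -- f = ρ' + c ρ, has derivative ρ'' + c ρ' ≥ wstar
  set f : ℝ → ℝ := fun x => ρ' x + c * ρ x with hf
  have hfderiv : ∀ x ∈ D, HasDerivAt f (ρ'' x + c * ρ' x) x := fun x hx =>
    (hderiv2 x hx).add ((hderiv x hx).const_mul c)
  have hfcont : ContinuousOn f D := fun x hx => ((hfderiv x hx).continuousAt).continuousWithinAt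
  have hfdiff : DifferentiableOn ℝ f (interior D) := fun x hx =>
    ((hfderiv x (hintD hx)).differentiableAt).differentiableWithinAt
  have step1 : ∀ x ∈ D, wstar * (x - lam₀) ≤ f x - f lam₀ := by
    intro x hx
    exact hconv.mul_sub_le_image_sub_of_le_deriv hfcont hfdiff
      (fun y hy => by rw [(hfderiv y (hintD hy)).deriv]; exact hineq y (hintD hy))
      lam₀ hmem₀ x hx hx.1
  -- hence ρ' x ≥ wstar (x - lam₀) - c R on D
  have step1' : ∀ x ∈ D, wstar * (x - lam₀) - c * R ≤ ρ' x := by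
    intro x hx
    have h1 := step1 x hx
    have h2 := (hbdd x hx).2
    have h3 : c * ρ x ≤ c * R := by nlinarith
    simp only [hf] at h1
    nlinarith
  -- h = ρ - (wstar (x-lam₀)²/2 - cR (x-lam₀)), deriv ≥ 0
  set h : ℝ → ℝ := fun x => ρ x - (wstar * (x - lam₀) ^ 2 / 2 - c * R * (x - lam₀)) with hh
  have hhderiv : ∀ x ∈ D, HasDerivAt h (ρ' x - (wstar * (x - lam₀) - c * R)) x := by
    intro x hx
    have hpoly : HasDerivAt (fun y => wstar * (y - lam₀) ^ 2 / 2 - c * R * (y - lam₀))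
        (wstar * (x - lam₀) - c * R) x := by
      have h1 : HasDerivAt (fun y : ℝ => y - lam₀) 1 x := (hasDerivAt_id x).sub_const lam₀
      have h2 := ((h1.pow 2).const_mul wstar).div_const 2
      have h3 := h1.const_mul (c * R)
      exact (h2.sub h3).congr_deriv (by norm_num; ring)
    exact (hderiv x hx).sub hpoly
  have step2 : (0:ℝ) * (lam₁ - lam₀) ≤ h lam₁ - h lam₀ := by
    apply hconv.mul_sub_le_image_sub_of_le_deriv
      (fun x hx => ((hhderiv x hx).continuousAt).continuousWithinAt)
      (fun x hx => ((hhderiv x (hintD hx)).differentiableAt).differentiableWithinAt)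
      (fun x hx => by
        rw [(hhderiv x (hintD hx)).deriv]
        have := step1' x (hintD hx); linarith)
      lam₀ hmem₀ lam₁ hmem₁ hlam
  simp only [hh, zero_mul, sub_self, mul_zero, ne_eq] at step2
  -- so ρ lam₁ - ρ lam₀ ≥ wstar T²/2 - cR T
  set T := lam₁ - lam₀ with hT
  have hT0 : 0 ≤ T := by linarith
  have hρ₀ := hbdd lam₀ hmem₀
  have hρ₁ := hbdd lam₁ hmem₁
  have hB : |R - ρ lam₀| = R - ρ lam₀ := abs_of_nonneg (by linarith [hρ₀.1, hρ₀.2])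
  have hkey : wstar * T ^ 2 / 2 - c * R * T ≤ R - ρ lam₀ := by
    have : wstar * T ^ 2 / 2 - c * R * T ≤ ρ lam₁ - ρ lam₀ := by
      have := step2; nlinarith [step2]
    linarith [hρ₁.2]
  rw [hB]
  set s := Real.sqrt ((c * R) ^ 2 + 2 * wstar * (R - ρ lam₀)) with hs
  have hs0 : 0 ≤ s := Real.sqrt_nonneg _
  have hssq : s ^ 2 = (c * R) ^ 2 + 2 * wstar * (R - ρ lam₀) := by
    rw [hs, Real.sq_sqrt]; nlinarith [hρ₀.1, hρ₀.2, mul_nonneg hc.le (le_trans hρ₀.1 hρ₀.2)]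
  have key2 : (wstar * T - c * R) ^ 2 ≤ s ^ 2 := by
    rw [hssq]
    have h2 : wstar * (wstar * T ^ 2 / 2 - c * R * T) ≤ wstar * (R - ρ lam₀) :=
      mul_le_mul_of_nonneg_left hkey hw.le
    ring_nf at h2 ⊢
    linarith [h2]
  have key3 : wstar * T - c * R ≤ s := by
    calc wstar * T - c * R ≤ |wstar * T - c * R| := le_abs_self _
      _ = Real.sqrt ((wstar * T - c * R) ^ 2) := (Real.sqrt_sq_eq_abs _).symm
      _ ≤ Real.sqrt (s ^ 2) := Real.sqrt_le_sqrt key2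
      _ = s := by rw [Real.sqrt_sq hs0]
  rw [div_mul_eq_mul_div, le_div_iff₀ hw, one_mul]
  nlinarith [key3]
end

section
/- Let c > 0 and let (U, c) be a solution of U'' - ∇W(U) = -c U' with U(±∞) = a^±, |U| bounded, U'(x_n) → 0 along sequences x_n → ±∞, total weighted energy ∫_ℝ (½|U'|² + W⁺(U)) e^{cx} dx < ∞, and E_c(U) = ∫_ℝ (½|U'|² + W(U)) e^{cx} dx ≥ 0. Then there is no c' with 0 < c' < c such that also E_{c'}(U) ≥ 0 and ∫_ℝ |U'|² e^{c'x} dx > 0. More precisely, for 0 < c' < c one has the identity c' E_{c'}(U) = (c' - c) ∫_ℝ |U'(x)|² e^{c'x} dx, so E_{c'}(U) < 0 whenever U is nonconstant. -/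
open MeasureTheory Real Filter
open scoped Topology RealInnerProductSpace

/-- Uniqueness of the speed of minimizing travelling waves. If `(U,c)`
is a travelling wave with bounded orbit, finite weighted energy, `E_c(U) ≥ 0`, and
`U' → 0` along sequences at `±∞`, then for every `0 < c' < c` one has the identity
`c' E_{c'}(U) = (c' - c) ∫ ‖U'‖² e^{c'x} dx`; in particular `E_{c'}(U) < 0` whenever
`∫ ‖U'‖² e^{c'x} dx > 0` (i.e. `U` nonconstant), so no smaller speed can satisfy
`E_{c'}(U) ≥ 0`. -/
theorem stmt14 {E : Type*} [NormedAddCommGroup E] [InnerProductSpace ℝ E]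
    [FiniteDimensional ℝ E]
    (W : E → ℝ) (hW : ContDiff ℝ 2 W) (aplus aminus : E) (hWaplus : W aplus = 0)
    (c : ℝ) (hc : 0 < c)
    (U : ℝ → E) (hU : ContDiff ℝ 2 U)
    (hODE : ∀ x : ℝ, deriv (deriv U) x - gradient W (U x) = -c • deriv U x)
    (hlimplus : Tendsto U atTop (𝓝 aplus)) (hlimminus : Tendsto U atBot (𝓝 aminus))
    (hbdd : ∃ M : ℝ, ∀ x : ℝ, ‖U x‖ ≤ M)
    (xs ys : ℕ → ℝ) (hxs : Tendsto xs atTop atTop) (hys : Tendsto ys atTop atBot)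
    (hdxs : Tendsto (fun n => deriv U (xs n)) atTop (𝓝 0))
    (hdys : Tendsto (fun n => deriv U (ys n)) atTop (𝓝 0))
    (hEplus : Integrable
      (fun x => (1 / 2 * ‖deriv U x‖ ^ 2 + max (W (U x)) 0) * exp (c * x)))
    (hEcInt : Integrable
      (fun x => (1 / 2 * ‖deriv U x‖ ^ 2 + W (U x)) * exp (c * x)))
    (hEc : 0 ≤ ∫ x : ℝ, (1 / 2 * ‖deriv U x‖ ^ 2 + W (U x)) * exp (c * x)) :
    ∀ c' : ℝ, 0 < c' → c' < c →
      Integrable (fun x => (1 / 2 * ‖deriv U x‖ ^ 2 + W (U x)) * exp (c' * x)) →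
      Integrable (fun x => ‖deriv U x‖ ^ 2 * exp (c' * x)) →
      (c' * ∫ x : ℝ, (1 / 2 * ‖deriv U x‖ ^ 2 + W (U x)) * exp (c' * x) =
        (c' - c) * ∫ x : ℝ, ‖deriv U x‖ ^ 2 * exp (c' * x)) ∧
      ((0 < ∫ x : ℝ, ‖deriv U x‖ ^ 2 * exp (c' * x)) →
        ∫ x : ℝ, (1 / 2 * ‖deriv U x‖ ^ 2 + W (U x)) * exp (c' * x) < 0) := by
  intro c' hc'0 hc'c hI1 hI2
  -- the "mechanical energy" g and its derivative
  set g : ℝ → ℝ := fun y => 1 / 2 * ‖deriv U y‖ ^ 2 - W (U y) with hgdef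
  have hg : ∀ x : ℝ, HasDerivAt g (-c * ‖deriv U x‖ ^ 2) x := by
    intro x
    have hU' : ContDiff ℝ 1 (deriv U) :=
      (contDiff_succ_iff_deriv.mp (show ContDiff ℝ (1 + 1) U by norm_num; exact_mod_cast hU)).2.2
    have hU1 : HasDerivAt U (deriv U x) x := ((hU.differentiable two_ne_zero) x).hasDerivAt
    have hU2 : HasDerivAt (deriv U) (deriv (deriv U) x) x :=
      ((hU'.differentiable one_ne_zero) x).hasDerivAt
    have hinner : HasDerivAt (fun y => ⟪deriv U y, deriv U y⟫)
        (⟪deriv U x, deriv (deriv U) x⟫ + ⟪deriv (deriv U) x, deriv U x⟫) x :=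
      hU2.inner ℝ hU2
    have hWg : HasGradientAt W (gradient W (U x)) (U x) :=
      ((hW.differentiable two_ne_zero) (U x)).hasGradientAt
    have hWU : HasDerivAt (fun y => W (U y)) (⟪gradient W (U x), deriv U x⟫) x := by
      have := hWg.hasFDerivAt.comp_hasDerivAt x hU1
      simpa [InnerProductSpace.toDual_apply_apply, Function.comp_def] using this
    have h := ((hinner.const_mul (1 / 2 : ℝ)).sub hWU)
    convert h using 1
    · rfl
    · rfl
    · funext y; simp only [g, Pi.sub_apply, real_inner_self_eq_norm_sq]
    · have key : ⟪deriv (deriv U) x - gradient W (U x), deriv U x⟫ =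
          ⟪-c • deriv U x, deriv U x⟫ := by rw [hODE x]
      rw [inner_sub_left, inner_smul_left] at key
      rw [show ‖deriv U x‖ ^ 2 = ⟪deriv U x, deriv U x⟫ from
        (real_inner_self_eq_norm_sq _).symm]
      simp only [RCLike.star_def, starRingEnd_apply, star_trivial] at key
      rw [real_inner_comm (deriv U x) (deriv (deriv U) x)] at key ⊢
      linear_combination -key
  -- derivative of k = e^{cx} g
  have hk : ∀ x : ℝ, HasDerivAt (fun y => exp (c * y) * g y)
      (-c * ((1 / 2 * ‖deriv U x‖ ^ 2 + W (U x)) * exp (c * x))) x := by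
    intro x
    have he : HasDerivAt (fun y : ℝ => exp (c * y)) (c * exp (c * x)) x := by
      simpa [mul_comm] using ((hasDerivAt_id x).const_mul c).exp
    have := he.mul (hg x)
    convert this using 1
    · rfl
    · rfl
    · rfl
    simp only [hgdef]; ring
  have hkint : Integrable
      (fun x => -c * ((1 / 2 * ‖deriv U x‖ ^ 2 + W (U x)) * exp (c * x))) :=
    hEcInt.const_mul _
  -- k converges at +∞
  have hkT : Tendsto (fun y => exp (c * y) * g y) atTop
      (𝓝 (exp (c * 0) * g 0 + ∫ t in Set.Ioi (0 : ℝ),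
        -c * ((1 / 2 * ‖deriv U t‖ ^ 2 + W (U t)) * exp (c * t)))) := by
    have h1 := intervalIntegral_tendsto_integral_Ioi 0 hkint.integrableOn
      (tendsto_id (α := ℝ) (x := atTop))
    have h2 : ∀ y : ℝ, exp (c * y) * g y = exp (c * 0) * g 0 +
        ∫ t in (0 : ℝ)..y, -c * ((1 / 2 * ‖deriv U t‖ ^ 2 + W (U t)) * exp (c * t)) := by
      intro y
      rw [intervalIntegral.integral_eq_sub_of_hasDerivAt (fun t _ => hk t)
        hkint.intervalIntegrable]
      ring
    have h3 := (tendsto_const_nhds (x := exp (c * 0) * g 0) (f := atTop)).add h1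
    refine h3.congr fun y => (h2 y).symm
  -- the weighted energy-flux function h = e^{c'x} g and its derivative φ
  set φ : ℝ → ℝ := fun x => c' * (exp (c' * x) * g x) - c * (‖deriv U x‖ ^ 2 * exp (c' * x))
    with hφdef
  have hh : ∀ x : ℝ, HasDerivAt (fun y => exp (c' * y) * g y) (φ x) x := by
    intro x
    have he : HasDerivAt (fun y : ℝ => exp (c' * y)) (c' * exp (c' * x)) x := by
      simpa [mul_comm] using ((hasDerivAt_id x).const_mul c').exp
    have := he.mul (hg x)
    convert this using 1
    · rfl
    · rfl
    · rfl
    simp only [hφdef]; ring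
  have hgint : Integrable (fun x => exp (c' * x) * g x) := by
    have h := hI2.sub hI1
    refine h.congr ?_
    filter_upwards with x
    simp only [Pi.sub_apply, hgdef]; ring
  have hφint : Integrable φ := by
    have h := (hgint.const_mul c').sub (hI2.const_mul c)
    exact h
  -- h tends to 0 at +∞ (since c' < c and k converges)
  have hT0 : Tendsto (fun y => exp (c' * y) * g y) atTop (𝓝 0) := by
    have heq : ∀ y : ℝ, exp (c' * y) * g y = exp ((c' - c) * y) * (exp (c * y) * g y) := by
      intro y
      rw [← mul_assoc, ← exp_add]
      ring_nf
    have he0 : Tendsto (fun y : ℝ => exp ((c' - c) * y)) atTop (𝓝 0) := by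
      apply tendsto_exp_atBot.comp
      exact Tendsto.const_mul_atTop_of_neg (by linarith) tendsto_id
    have := he0.mul hkT
    rw [zero_mul] at this
    exact this.congr fun y => (heq y).symm
  -- h converges at -∞
  have hB : Tendsto (fun y => exp (c' * y) * g y) atBot
      (𝓝 (exp (c' * 0) * g 0 - ∫ t in Set.Iic (0 : ℝ), φ t)) := by
    have h1 := intervalIntegral_tendsto_integral_Iic 0 hφint.integrableOn
      (tendsto_id (α := ℝ) (x := atBot))
    have h2 : ∀ y : ℝ, exp (c' * y) * g y = exp (c' * 0) * g 0 -
        ∫ t in y..(0 : ℝ), φ t := by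
      intro y
      rw [intervalIntegral.integral_eq_sub_of_hasDerivAt (fun t _ => hh t)
        hφint.intervalIntegrable]
      ring
    have h3 := (tendsto_const_nhds (x := exp (c' * 0) * g 0) (f := atBot)).sub h1
    refine h3.congr fun y => (h2 y).symm
  -- along the sequence ys the value of h tends to 0
  have hB0 : Tendsto (fun n => exp (c' * ys n) * g (ys n)) atTop (𝓝 0) := by
    have h1 : Tendsto (fun n => exp (c' * ys n)) atTop (𝓝 0) :=
      tendsto_exp_atBot.comp (Tendsto.const_mul_atBot hc'0 hys)
    have h2 : Tendsto (fun n => g (ys n)) atTop (𝓝 (1 / 2 * ‖(0 : E)‖ ^ 2 - W aminus)) := by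
      have hn : Tendsto (fun n => 1 / 2 * ‖deriv U (ys n)‖ ^ 2) atTop
          (𝓝 (1 / 2 * ‖(0 : E)‖ ^ 2)) := ((hdys.norm.pow 2).const_mul _)
      have hw : Tendsto (fun n => W (U (ys n))) atTop (𝓝 (W aminus)) :=
        (hW.continuous.tendsto aminus).comp (hlimminus.comp hys)
      exact hn.sub hw
    have := h1.mul h2
    rw [zero_mul] at this
    exact this
  -- hence the limit of h at -∞ is 0
  have hLm : exp (c' * 0) * g 0 - ∫ t in Set.Iic (0 : ℝ), φ t = 0 :=
    tendsto_nhds_unique (hB.comp hys) hB0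
  have hB' : Tendsto (fun y => exp (c' * y) * g y) atBot (𝓝 0) := by
    rw [← hLm]; exact hB
  -- FTC on the two half-lines
  have hIoi : ∫ x in Set.Ioi (0 : ℝ), φ x = 0 - exp (c' * 0) * g 0 :=
    integral_Ioi_of_hasDerivAt_of_tendsto' (fun x _ => hh x) hφint.integrableOn hT0
  have hIic : ∫ x in Set.Iic (0 : ℝ), φ x = exp (c' * 0) * g 0 - 0 :=
    integral_Iic_of_hasDerivAt_of_tendsto' (fun x _ => hh x) hφint.integrableOn hB'
  have htot : ∫ x : ℝ, φ x = 0 := by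
    rw [← intervalIntegral.integral_Iic_add_Ioi hφint.integrableOn hφint.integrableOn, hIoi, hIic]
    ring
  -- unpack the integral identity
  have hsplit : ∫ x : ℝ, exp (c' * x) * g x =
      (∫ x : ℝ, ‖deriv U x‖ ^ 2 * exp (c' * x)) -
        ∫ x : ℝ, (1 / 2 * ‖deriv U x‖ ^ 2 + W (U x)) * exp (c' * x) := by
    rw [← integral_sub hI2 hI1]
    congr 1; funext x; simp only [hgdef]; ring
  have hφval : ∫ x : ℝ, φ x = c' * (∫ x : ℝ, exp (c' * x) * g x) -
      c * ∫ x : ℝ, ‖deriv U x‖ ^ 2 * exp (c' * x) := by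
    rw [hφdef, integral_sub (hgint.const_mul c') (hI2.const_mul c),
      integral_const_mul, integral_const_mul]
  have hkey : c' * ∫ x : ℝ, (1 / 2 * ‖deriv U x‖ ^ 2 + W (U x)) * exp (c' * x) =
      (c' - c) * ∫ x : ℝ, ‖deriv U x‖ ^ 2 * exp (c' * x) := by
    rw [htot, hsplit] at hφval
    linarith [hφval]
  refine ⟨hkey, fun hpos => ?_⟩
  nlinarith [hkey, mul_pos (sub_pos.mpr hc'c) hpos]
end

section
/- Let c > 0 and U : [ω, ∞) → ℝ^N be a C² solution of U'' - ∇W(U) = -c U' with U(∞) = a⁺, W(a⁺) = 0, U'(x_n) → 0 along some sequence x_n → ∞, and U' ∈ L²([ω,∞), e^{cx}dx)^N. Then for every ω, 0 ≤ (e^{cω}/c)(|U'(ω)|²/2 - W(U(ω))) ≤ ∫_ω^∞ |U'(x)|² e^{cx} dx, and consequently lim_{ω→∞} (e^{cω}/c)(W(U(ω)) - |U'(ω)|²/2) = 0. -/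
open MeasureTheory Real Filter
open scoped Topology RealInnerProductSpace

/-- Equipartition limit at `+∞` (Lemma 5.3). For a C² solution of
`U'' - ∇W(U) = -c U'` on `[ω₀, ∞)` with `U(∞) = a⁺`, `W(a⁺) = 0`, `U' → 0` along a
sequence, and `U' ∈ L²(e^{cx}dx)`, one has for every `ω ≥ ω₀`
`0 ≤ (e^{cω}/c)(‖U'(ω)‖²/2 - W(U(ω))) ≤ ∫_ω^∞ ‖U'‖² e^{cx} dx`, and consequently
`(e^{cω}/c)(W(U(ω)) - ‖U'(ω)‖²/2) → 0` as `ω → ∞`. -/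
theorem stmt19 {E : Type*} [NormedAddCommGroup E] [InnerProductSpace ℝ E]
    [FiniteDimensional ℝ E]
    (W : E → ℝ) (hW : ContDiff ℝ 2 W) (aplus : E) (hWaplus : W aplus = 0)
    (c ω₀ : ℝ) (hc : 0 < c)
    (U : ℝ → E) (hU : ContDiff ℝ 2 U)
    (hODE : ∀ x : ℝ, ω₀ ≤ x →
      deriv (deriv U) x - gradient W (U x) = -c • deriv U x)
    (hlim : Tendsto U atTop (𝓝 aplus))
    (xs : ℕ → ℝ) (hxs : Tendsto xs atTop atTop)
    (hdxs : Tendsto (fun n => deriv U (xs n)) atTop (𝓝 0))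
    (hL2 : IntegrableOn (fun x => ‖deriv U x‖ ^ 2 * exp (c * x)) (Set.Ici ω₀)) :
    (∀ ω : ℝ, ω₀ ≤ ω →
      0 ≤ exp (c * ω) / c * (‖deriv U ω‖ ^ 2 / 2 - W (U ω)) ∧
      exp (c * ω) / c * (‖deriv U ω‖ ^ 2 / 2 - W (U ω)) ≤
        ∫ x in Set.Ici ω, ‖deriv U x‖ ^ 2 * exp (c * x)) ∧
    Tendsto (fun ω => exp (c * ω) / c * (W (U ω) - ‖deriv U ω‖ ^ 2 / 2))
      atTop (𝓝 0) := by
  set V : ℝ → E := deriv U with hVdef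
  -- regularity
  have hU2 : ContDiff ℝ (1 + 1) U := by
    rw [one_add_one_eq_two]; exact_mod_cast hU
  obtain ⟨hUdiff, -, hV1⟩ := contDiff_succ_iff_deriv.mp hU2
  have hVdiff : Differentiable ℝ V := hV1.differentiable one_ne_zero
  have hVcont : Continuous V := hV1.continuous
  have hWdiff : Differentiable ℝ W := hW.differentiable two_ne_zero
  -- the energy
  set Efun : ℝ → ℝ := fun x => ‖V x‖ ^ 2 / 2 - W (U x) with hEdef
  have hEeq : Efun = fun t => ⟪V t, V t⟫ / 2 - W (U t) := by
    funext t; rw [hEdef]; rw [real_inner_self_eq_norm_sq]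
  -- derivative of the energy
  have hEderiv : ∀ x, ω₀ ≤ x → HasDerivAt Efun (-(c * ‖V x‖ ^ 2)) x := by
    intro x hx
    have h1 : HasDerivAt V (deriv V x) x := (hVdiff x).hasDerivAt
    have h2 : HasDerivAt U (V x) x := (hUdiff x).hasDerivAt
    have hin : HasDerivAt (fun t => ⟪V t, V t⟫)
        (⟪V x, deriv V x⟫ + ⟪deriv V x, V x⟫) x := HasDerivAt.inner ℝ h1 h1
    have hWc : HasDerivAt (fun t => W (U t)) (⟪gradient W (U x), V x⟫) x := by
      have := ((hWdiff (U x)).hasGradientAt.hasFDerivAt).comp_hasDerivAt x h2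
      simpa only [Function.comp_def, InnerProductSpace.toDual_apply_apply] using this
    have hall : HasDerivAt (fun t => ⟪V t, V t⟫ / 2 - W (U t)) _ x := ((hin.div_const 2).sub hWc)
    rw [← hEeq] at hall
    have key : (⟪V x, deriv V x⟫ + ⟪deriv V x, V x⟫) / 2
        - ⟪gradient W (U x), V x⟫ = -(c * ‖V x‖ ^ 2) := by
      have hsym : ⟪V x, deriv V x⟫ = ⟪deriv V x, V x⟫ := real_inner_comm _ _
      have h3 : ⟪deriv V x, V x⟫ - ⟪gradient W (U x), V x⟫
          = ⟪deriv V x - gradient W (U x), V x⟫ := (inner_sub_left _ _ _).symm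
      have h4 : deriv V x - gradient W (U x) = -c • V x := hODE x hx
      have h5 : ⟪deriv V x - gradient W (U x), V x⟫ = -c * ‖V x‖ ^ 2 := by
        rw [h4, real_inner_smul_left, real_inner_self_eq_norm_sq]
      linarith [hsym, h3, h5]
    rwa [key] at hall
  -- FTC : energy identity
  have hFTC : ∀ ω y : ℝ, ω₀ ≤ ω → ω ≤ y →
      Efun ω - Efun y = ∫ x in ω..y, c * ‖V x‖ ^ 2 := by
    intro ω y hω hωy
    have hcont : Continuous fun x => -(c * ‖V x‖ ^ 2) := by
      continuity
    have hder : ∀ x ∈ Set.uIcc ω y, HasDerivAt Efun (-(c * ‖V x‖ ^ 2)) x := by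
      intro x hx
      rw [Set.uIcc_of_le hωy] at hx
      exact hEderiv x (le_trans hω hx.1)
    have := intervalIntegral.integral_eq_sub_of_hasDerivAt hder
      (hcont.intervalIntegrable ω y)
    rw [intervalIntegral.integral_neg] at this
    linarith
  -- energy tends to 0 along the sequence
  have hE0 : Tendsto (fun n => Efun (xs n)) atTop (𝓝 0) := by
    have h1 : Tendsto (fun n => ⟪V (xs n), V (xs n)⟫) atTop (𝓝 (⟪(0 : E), (0 : E)⟫)) :=
      hdxs.inner hdxs
    have h2 : Tendsto (fun n => W (U (xs n))) atTop (𝓝 (W aplus)) :=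
      (hW.continuous.tendsto aplus).comp (hlim.comp hxs)
    have h3 := (h1.div_const 2).sub h2
    rw [inner_zero_left, hWaplus] at h3
    simp only [zero_div, sub_zero] at h3
    have h4 : (fun n => ⟪V (xs n), V (xs n)⟫ / 2 - W (U (xs n))) = fun n => Efun (xs n) := by
      funext n; rw [hEeq]
    rwa [h4] at h3
  -- energy nonnegative
  have hEnonneg : ∀ ω : ℝ, ω₀ ≤ ω → 0 ≤ Efun ω := by
    intro ω hω
    refine le_of_tendsto hE0 ?_
    filter_upwards [hxs.eventually_ge_atTop ω] with n hn
    have h1 := hFTC ω (xs n) hω hn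
    have h2 : 0 ≤ ∫ x in ω..xs n, c * ‖V x‖ ^ 2 :=
      intervalIntegral.integral_nonneg hn (fun x _ => by positivity)
    linarith
  -- main inequality : e^{cω} Efun ω ≤ c ∫_{Ici ω} ‖V‖² e^{cx}
  have hMain : ∀ ω : ℝ, ω₀ ≤ ω →
      exp (c * ω) * Efun ω ≤ c * ∫ x in Set.Ici ω, ‖V x‖ ^ 2 * exp (c * x) := by
    intro ω hω
    set I : ℝ := ∫ x in Set.Ici ω, ‖V x‖ ^ 2 * exp (c * x) with hI
    have hIf : IntegrableOn (fun x => ‖V x‖ ^ 2 * exp (c * x)) (Set.Ici ω) :=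
      hL2.mono_set (Set.Ici_subset_Ici.mpr hω)
    have hbound : ∀ n : ℕ, ω ≤ xs n →
        exp (c * ω) * (Efun ω - Efun (xs n)) ≤ c * I := by
      intro n hn
      rw [hFTC ω (xs n) hω hn]
      have hJ : ∫ x in ω..xs n, c * ‖V x‖ ^ 2
          = c * ∫ x in ω..xs n, ‖V x‖ ^ 2 := by
        rw [intervalIntegral.integral_const_mul]
      rw [hJ]
      have hJIoc : ∫ x in ω..xs n, ‖V x‖ ^ 2 = ∫ x in Set.Ioc ω (xs n), ‖V x‖ ^ 2 :=
        intervalIntegral.integral_of_le hn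
      have hg_int : IntegrableOn (fun x => ‖V x‖ ^ 2 * exp (c * ω)) (Set.Ioc ω (xs n)) := by
        apply Continuous.integrableOn_Ioc
        continuity
      have hf_int : IntegrableOn (fun x => ‖V x‖ ^ 2 * exp (c * x)) (Set.Ioc ω (xs n)) :=
        hIf.mono_set (fun x hx => hx.1.le)
      have step1 : ∫ x in Set.Ioc ω (xs n), ‖V x‖ ^ 2 * exp (c * ω)
          ≤ ∫ x in Set.Ioc ω (xs n), ‖V x‖ ^ 2 * exp (c * x) := by
        refine setIntegral_mono_on hg_int hf_int measurableSet_Ioc ?_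
        intro x hx
        have : exp (c * ω) ≤ exp (c * x) :=
          exp_le_exp.mpr (mul_le_mul_of_nonneg_left hx.1.le hc.le)
        exact mul_le_mul_of_nonneg_left this (by positivity)
      have step2 : ∫ x in Set.Ioc ω (xs n), ‖V x‖ ^ 2 * exp (c * x) ≤ I := by
        refine setIntegral_mono_set hIf ?_ ?_
        · exact Eventually.of_forall fun x => by positivity
        · exact HasSubset.Subset.eventuallyLE (fun x hx => hx.1.le)
      have step0 : (∫ x in Set.Ioc ω (xs n), ‖V x‖ ^ 2) * exp (c * ω)
          = ∫ x in Set.Ioc ω (xs n), ‖V x‖ ^ 2 * exp (c * ω) :=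
        (integral_mul_const _ _).symm
      calc exp (c * ω) * (c * ∫ x in ω..xs n, ‖V x‖ ^ 2)
          = c * ((∫ x in Set.Ioc ω (xs n), ‖V x‖ ^ 2) * exp (c * ω)) := by
            rw [hJIoc]; ring
        _ ≤ c * I := by
            rw [step0]
            exact mul_le_mul_of_nonneg_left (le_trans step1 step2) hc.le
    have htend : Tendsto (fun n => exp (c * ω) * (Efun ω - Efun (xs n))) atTop
        (𝓝 (exp (c * ω) * Efun ω)) := by
      have := tendsto_const_nhds.sub hE0 (f := fun _ : ℕ => Efun ω)
      have h2 := (tendsto_const_nhds (x := exp (c * ω))).mul this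
      simpa using h2
    refine le_of_tendsto htend ?_
    filter_upwards [hxs.eventually_ge_atTop ω] with n hn using hbound n hn
  -- first part of conclusion
  have part1 : ∀ ω : ℝ, ω₀ ≤ ω →
      0 ≤ exp (c * ω) / c * (‖deriv U ω‖ ^ 2 / 2 - W (U ω)) ∧
      exp (c * ω) / c * (‖deriv U ω‖ ^ 2 / 2 - W (U ω)) ≤
        ∫ x in Set.Ici ω, ‖deriv U x‖ ^ 2 * exp (c * x) := by
    intro ω hω
    have hEω : ‖deriv U ω‖ ^ 2 / 2 - W (U ω) = Efun ω := rfl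
    constructor
    · rw [hEω]
      have := hEnonneg ω hω
      positivity
    · rw [hEω, div_mul_eq_mul_div, div_le_iff₀ hc]
      have := hMain ω hω
      calc exp (c * ω) * Efun ω
          ≤ c * ∫ x in Set.Ici ω, ‖V x‖ ^ 2 * exp (c * x) := this
        _ = (∫ x in Set.Ici ω, ‖deriv U x‖ ^ 2 * exp (c * x)) * c := by ring
  refine ⟨part1, ?_⟩
  -- tail of the weighted integral tends to 0
  set f : ℝ → ℝ := fun x => ‖deriv U x‖ ^ 2 * exp (c * x) with hfdef
  have hIoi : IntegrableOn f (Set.Ioi ω₀) := hL2.mono_set Set.Ioi_subset_Ici_self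
  have hT0 : Tendsto (fun ω => ∫ x in Set.Ici ω, f x) atTop (𝓝 0) := by
    have h1 : Tendsto (fun ω => ∫ x in ω₀..ω, f x) atTop
        (𝓝 (∫ x in Set.Ioi ω₀, f x)) :=
      intervalIntegral_tendsto_integral_Ioi ω₀ hIoi tendsto_id
    have heq : ∀ᶠ ω in atTop, (∫ x in Set.Ioi ω₀, f x) - ∫ x in ω₀..ω, f x
        = ∫ x in Set.Ici ω, f x := by
      filter_upwards [eventually_ge_atTop ω₀] with ω hω
      have hsplit : ∫ x in Set.Ioi ω₀, f x
          = (∫ x in Set.Ioc ω₀ ω, f x) + ∫ x in Set.Ioi ω, f x := by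
        rw [← Set.Ioc_union_Ioi_eq_Ioi hω]
        exact setIntegral_union (Set.Ioc_disjoint_Ioi le_rfl) measurableSet_Ioi
          (hIoi.mono_set Set.Ioc_subset_Ioi_self)
          (hIoi.mono_set (Set.Ioi_subset_Ioi hω))
      rw [intervalIntegral.integral_of_le hω, integral_Ici_eq_integral_Ioi]
      linarith
    have h2 : Tendsto (fun ω => (∫ x in Set.Ioi ω₀, f x) - ∫ x in ω₀..ω, f x)
        atTop (𝓝 0) := by
      have := tendsto_const_nhds.sub h1 (f := fun _ : ℝ => ∫ x in Set.Ioi ω₀, f x)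
      simpa using this
    exact h2.congr' heq
  -- squeeze
  have hsq : Tendsto (fun ω => exp (c * ω) / c * (‖deriv U ω‖ ^ 2 / 2 - W (U ω)))
      atTop (𝓝 0) := by
    refine squeeze_zero' ?_ ?_ hT0
    · filter_upwards [eventually_ge_atTop ω₀] with ω hω using (part1 ω hω).1
    · filter_upwards [eventually_ge_atTop ω₀] with ω hω using (part1 ω hω).2
  have := hsq.neg
  rw [neg_zero] at this
  refine this.congr fun ω => ?_
  ring
end
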